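/- Let ψ:(0,∞)→(0,∞) be non-decreasing with ∫₀^r s/ψ(s) ds < ∞ for every r>0, let Φ(r) := r²/(2∫₀^r s/ψ(s) ds), and let 𝒦(s) := sup_{0<b≤s} Φ(b)/b. Suppose Φ satisfies L_a(δ,C̃) with δ>1, C̃∈(0,1] and a∈(0,∞]. Then for every 0<t<a: Φ(t)/t ≤ 𝒦(t) ≤ C̃⁻¹·Φ(t)/t; and for all 0<s≤t<a: C̃²(t/s)^{δ−1} ≤ 𝒦(t)/𝒦(s) ≤ C̃⁻¹·(t/s). -/

import Mathlib

open MeasureTheory Set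
open scoped ENNReal

/-- `𝒦(s) := sup_{0 < b ≤ s} Φ(b)/b`. -/
noncomputable def scaleK (Φ : ℝ → ℝ) (s : ℝ) : ℝ :=
  sSup ((fun b => Φ b / b) '' Set.Ioc 0 s)

/-- With `Φ(r) = r²/(2∫₀^r s/ψ(s) ds)` and
`𝒦(s) := sup_{0 < b ≤ s} Φ(b)/b`: if `Φ` satisfies `L_a(δ, C̃)` with `δ > 1`,
`C̃ ∈ (0,1]`, `a ∈ (0,∞]`, then for `0 < t < a` we have
`Φ(t)/t ≤ 𝒦(t) ≤ C̃⁻¹ Φ(t)/t`, and for `0 < s ≤ t < a`,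
`C̃² (t/s)^{δ-1} ≤ 𝒦(t)/𝒦(s) ≤ C̃⁻¹ (t/s)`. -/
theorem stmt_9 (ψ Φ : ℝ → ℝ)
    (hψ_pos : ∀ r : ℝ, 0 < r → 0 < ψ r)
    (hψ_mono : ∀ r s : ℝ, 0 < r → r ≤ s → ψ r ≤ ψ s)
    (hψ_int : ∀ r : ℝ, 0 < r → IntegrableOn (fun s => s / ψ s) (Ioo 0 r))
    (hΦ : ∀ r : ℝ, 0 < r → Φ r = r ^ 2 / (2 * ∫ s in Ioo (0:ℝ) r, s / ψ s))
    (a : ℝ≥0∞) (ha : 0 < a) (δ Cl : ℝ) (hδ : 1 < δ) (hCl : 0 < Cl) (hCl1 : Cl ≤ 1)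
    (hL : ∀ r R : ℝ, 0 < r → r ≤ R → ENNReal.ofReal R < a →
      Cl * (R / r) ^ δ ≤ Φ R / Φ r) :
    (∀ t : ℝ, 0 < t → ENNReal.ofReal t < a →
      Φ t / t ≤ scaleK Φ t ∧ scaleK Φ t ≤ Cl⁻¹ * (Φ t / t)) ∧
    (∀ s t : ℝ, 0 < s → s ≤ t → ENNReal.ofReal t < a →
      Cl ^ 2 * (t / s) ^ (δ - 1) ≤ scaleK Φ t / scaleK Φ s ∧
      scaleK Φ t / scaleK Φ s ≤ Cl⁻¹ * (t / s)) := by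

  -- positivity of the integral
  have hI_pos : ∀ r : ℝ, 0 < r → 0 < ∫ s in Ioo (0:ℝ) r, s / ψ s := by
    intro r hr
    have hne : ∀ x ∈ Ioo (0:ℝ) r, 0 < x / ψ x := fun x hx => div_pos hx.1 (hψ_pos x hx.1)
    have h0 : 0 ≤ᵐ[volume.restrict (Ioo (0:ℝ) r)] fun s => s / ψ s :=
      ae_restrict_of_forall_mem measurableSet_Ioo fun x hx => (hne x hx).le
    rw [MeasureTheory.setIntegral_pos_iff_support_of_nonneg_ae h0 (hψ_int r hr)]
    have hsub : Ioo (0:ℝ) r ⊆ (Function.support fun s => s / ψ s) ∩ Ioo (0:ℝ) r :=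
      fun x hx => ⟨(hne x hx).ne', hx⟩
    calc (0:ℝ≥0∞) < volume (Ioo (0:ℝ) r) := by simp [Real.volume_Ioo, hr]
      _ ≤ _ := measure_mono hsub
  have hΦ_pos : ∀ r : ℝ, 0 < r → 0 < Φ r := by
    intro r hr
    rw [hΦ r hr]
    exact div_pos (by positivity) (by have := hI_pos r hr; positivity)
  -- monotonicity of the integral
  have hint_mono : ∀ s t : ℝ, 0 < s → s ≤ t →
      (∫ x in Ioo (0:ℝ) s, x / ψ x) ≤ ∫ x in Ioo (0:ℝ) t, x / ψ x := by
    intro s t hs hst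
    apply setIntegral_mono_set (hψ_int t (hs.trans_le hst))
    · exact ae_restrict_of_forall_mem measurableSet_Ioo
        fun x hx => (div_pos hx.1 (hψ_pos x hx.1)).le
    · exact (Ioo_subset_Ioo_right hst).eventuallyLE
  have hΦratio : ∀ s t : ℝ, 0 < s → s ≤ t → Φ t * s ^ 2 ≤ Φ s * t ^ 2 := by
    intro s t hs hst
    have ht := hs.trans_le hst
    have hIs := hI_pos s hs
    have hIt := hI_pos t ht
    have hm := hint_mono s t hs hst
    rw [hΦ s hs, hΦ t ht, div_mul_eq_mul_div, div_mul_eq_mul_div,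
      div_le_div_iff₀ (by positivity) (by positivity)]
    nlinarith [mul_le_mul_of_nonneg_left hm (by positivity : (0:ℝ) ≤ 2 * (t^2 * s^2))]
  -- the key pointwise bound
  have hbound : ∀ t : ℝ, 0 < t → ENNReal.ofReal t < a →
      ∀ b ∈ Ioc (0:ℝ) t, Φ b / b ≤ Cl⁻¹ * (Φ t / t) := by
    intro t ht hta b hb
    have hL' := hL b t hb.1 hb.2 hta
    have h1 : (1:ℝ) ≤ t / b := (one_le_div hb.1).mpr hb.2
    have hx : t / b ≤ (t / b) ^ δ := by
      calc t / b = (t / b) ^ (1:ℝ) := (Real.rpow_one _).symm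
        _ ≤ (t / b) ^ δ := Real.rpow_le_rpow_of_exponent_le h1 hδ.le
    have h2 : Cl * (t / b) ≤ Φ t / Φ b :=
      le_trans (mul_le_mul_of_nonneg_left hx hCl.le) hL'
    have h3 : Cl * (t / b) * Φ b ≤ Φ t := (le_div_iff₀ (hΦ_pos b hb.1)).mp h2
    have hdb : t / b * b = t := div_mul_cancel₀ t hb.1.ne'
    have h4 : Cl * t * Φ b ≤ Φ t * b := by
      have h5 := mul_le_mul_of_nonneg_right h3 hb.1.le
      calc Cl * t * Φ b = Cl * (t / b * b) * Φ b := by rw [hdb]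
        _ = Cl * (t / b) * Φ b * b := by ring
        _ ≤ Φ t * b := h5
    rw [div_le_iff₀ hb.1]
    rw [show Cl⁻¹ * (Φ t / t) * b = Φ t * b / (Cl * t) by field_simp]
    rw [le_div_iff₀ (by positivity)]
    nlinarith [h4]
  -- bounds on scaleK
  have hK : ∀ t : ℝ, 0 < t → ENNReal.ofReal t < a →
      Φ t / t ≤ scaleK Φ t ∧ scaleK Φ t ≤ Cl⁻¹ * (Φ t / t) := by
    intro t ht hta
    have hbdd : BddAbove ((fun b => Φ b / b) '' Ioc 0 t) := by
      refine ⟨Cl⁻¹ * (Φ t / t), ?_⟩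
      rintro x ⟨b, hb, rfl⟩
      exact hbound t ht hta b hb
    constructor
    · exact le_csSup hbdd ⟨t, ⟨ht, le_rfl⟩, rfl⟩
    · refine csSup_le ⟨Φ t / t, ⟨t, ⟨ht, le_rfl⟩, rfl⟩⟩ ?_
      rintro x ⟨b, hb, rfl⟩
      exact hbound t ht hta b hb
  refine ⟨hK, ?_⟩
  intro s t hs hst hta
  have ht : 0 < t := hs.trans_le hst
  have hsa : ENNReal.ofReal s < a := lt_of_le_of_lt (ENNReal.ofReal_le_ofReal hst) hta
  obtain ⟨h1t, h2t⟩ := hK t ht hta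
  obtain ⟨h1s, h2s⟩ := hK s hs hsa
  have hΦt := hΦ_pos t ht
  have hΦs := hΦ_pos s hs
  have hKt : 0 < scaleK Φ t := lt_of_lt_of_le (div_pos hΦt ht) h1t
  have hKs : 0 < scaleK Φ s := lt_of_lt_of_le (div_pos hΦs hs) h1s
  have hts : 0 < t / s := div_pos ht hs
  have hXpos : 0 < (t / s) ^ δ := Real.rpow_pos_of_pos hts δ
  have hLst := hL s t hs hst hta
  have hkey : Cl * (t / s) ^ δ * Φ s ≤ Φ t := (le_div_iff₀ hΦs).mp hLst
  have hpow : (t / s) ^ (δ - 1) = (t / s) ^ δ * (s / t) := by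
    rw [Real.rpow_sub hts, Real.rpow_one, div_eq_mul_inv, inv_div]
  constructor
  · -- lower bound
    have hchain : (Φ t / t) / (Cl⁻¹ * (Φ s / s)) ≤ scaleK Φ t / scaleK Φ s :=
      div_le_div₀ hKt.le h1t hKs h2s
    refine le_trans ?_ hchain
    rw [hpow]
    rw [show (Φ t / t) / (Cl⁻¹ * (Φ s / s)) = Cl * (Φ t * s) / (t * Φ s) by
      field_simp]
    rw [le_div_iff₀ (by positivity)]
    have e : Cl ^ 2 * ((t / s) ^ δ * (s / t)) * (t * Φ s)
        = Cl * (Cl * (t / s) ^ δ * Φ s) * (s / t * t) := by ring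
    rw [e, div_mul_cancel₀ s ht.ne']
    nlinarith [mul_le_mul_of_nonneg_left hkey (by positivity : (0:ℝ) ≤ Cl * s)]
  · -- upper bound
    have hchain : scaleK Φ t / scaleK Φ s ≤ (Cl⁻¹ * (Φ t / t)) / (Φ s / s) :=
      div_le_div₀ (by positivity) h2t (div_pos hΦs hs) h1s
    refine hchain.trans ?_
    have hr := hΦratio s t hs hst
    rw [div_le_iff₀ (div_pos hΦs hs), mul_assoc, mul_le_mul_iff_right₀ (inv_pos.mpr hCl),
      div_mul_div_comm, div_le_div_iff₀ ht (by positivity)]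
    nlinarith [hr]
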